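/- Let k ≥ 2 be an integer, let c be a metric TSP instance on n ≥ 3 vertices and let T be a k-optimal tour of this instance. Then there exist a metric TSP instance c' on n + 1 vertices and a k-optimal tour T' of c' such that c'(T') = c(T) and the minimum cost of a tour of c' is at most the minimum cost of a tour of c. -/

import Mathlib

open Finset

section TSP

variable {V : Type} [Fintype V] [DecidableEq V]

/-- A tour is a Hamiltonian cycle, modeled as a cyclic permutation of all vertices. -/
def IsTour (T : Equiv.Perm V) : Prop :=
  T.IsCycle ∧ T.support = Finset.univ

/-- The cost of a tour: the sum of the costs of its edges. -/
noncomputable def tourCost (c : V → V → ℝ) (T : Equiv.Perm V) : ℝ :=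
  ∑ v, c v (T v)

/-- The edge set of a tour. -/
def tourEdges (T : Equiv.Perm V) : Finset (Sym2 V) :=
  Finset.image (fun v => s(v, T v)) Finset.univ

/-- A metric TSP cost function: symmetric, zero on the diagonal, nonnegative,
satisfying the triangle inequality. -/
def IsMetric (c : V → V → ℝ) : Prop :=
  (∀ u v, c u v = c v u) ∧ (∀ v, c v v = 0) ∧ (∀ u v, 0 ≤ c u v) ∧
    ∀ x y z, c x y ≤ c x z + c z y

/-- A tour `T` is `k`-optimal if every tour `T'` whose edge set contains at most `k`
edges not in `T` is at least as expensive as `T`. -/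
def IsKOptimal (k : ℕ) (c : V → V → ℝ) (T : Equiv.Perm V) : Prop :=
  IsTour T ∧ ∀ T' : Equiv.Perm V, IsTour T' →
    (tourEdges T' \ tourEdges T).card ≤ k → tourCost c T ≤ tourCost c T'

/-- An optimal tour: a tour of minimum cost. -/
def IsOptimalTour (c : V → V → ℝ) (T : Equiv.Perm V) : Prop :=
  IsTour T ∧ ∀ T' : Equiv.Perm V, IsTour T' → tourCost c T ≤ tourCost c T'

end TSP

theorem Equiv.Perm.inv_apply_self {α : Type*} (f : Equiv.Perm α) (x : α) : f⁻¹ (f x) = x :=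
  f.symm_apply_apply x

theorem Equiv.Perm.apply_inv_self {α : Type*} (f : Equiv.Perm α) (x : α) : f (f⁻¹ x) = x :=
  f.apply_symm_apply x

namespace TSPAux

open Equiv Equiv.Perm

variable {n : ℕ} [NeZero n]

/-- Map `Fin (n+1)` down to `Fin n`, sending `last` to `0`. -/
def fdown (v : Fin (n + 1)) : Fin n :=
  if h : v = Fin.last n then 0 else v.castPred h

@[simp] lemma fdown_castSucc (v : Fin n) : fdown v.castSucc = v := by
  simp [fdown, (Fin.castSucc_lt_last v).ne]

@[simp] lemma fdown_last : fdown (Fin.last n) = (0 : Fin n) := by simp [fdown]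

lemma castSucc_fdown {w : Fin (n + 1)} (h : w ≠ Fin.last n) :
    (fdown w).castSucc = w := by
  simp [fdown, h, Fin.castSucc_castPred]

/-- The extended cost function: the new vertex `last` is a duplicate of vertex `0`. -/
noncomputable def cost' (c : Fin n → Fin n → ℝ) (u v : Fin (n + 1)) : ℝ :=
  if u = v then 0 else c (fdown u) (fdown v)

lemma isMetric_cost' {c : Fin n → Fin n → ℝ} (hc : IsMetric c) :
    IsMetric (cost' c) := by
  obtain ⟨hsymm, hdiag, hnonneg, htri⟩ := hc
  refine ⟨?_, ?_, ?_, ?_⟩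
  · intro u v
    by_cases h : u = v
    · simp [cost', h]
    · simp [cost', h, Ne.symm h, hsymm (fdown u) (fdown v)]
  · intro v; simp [cost']
  · intro u v
    by_cases h : u = v
    · simp [cost', h]
    · simpa [cost', h] using hnonneg (fdown u) (fdown v)
  · intro x y z
    by_cases hxy : x = y
    · subst hxy
      have h1 : (0:ℝ) ≤ cost' c x z := by
        by_cases h : x = z
        · simp [cost', h]
        · simpa [cost', h] using hnonneg (fdown x) (fdown z)
      have h2 : (0:ℝ) ≤ cost' c z x := by
        by_cases h : z = x
        · simp [cost', h]
        · simpa [cost', h] using hnonneg (fdown z) (fdown x)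
      rw [show cost' c x x = 0 from by simp [cost']]
      exact add_nonneg h1 h2
    · by_cases hxz : x = z
      · subst hxz; simp [cost']
      · by_cases hzy : z = y
        · subst hzy; simp [cost']
        · simp only [cost', if_neg hxy, if_neg hxz, if_neg hzy]
          exact htri _ _ _

/-- Lift a permutation of `Fin n` to `Fin (n+1)` fixing `last`. -/
def liftP (S : Perm (Fin n)) : Perm (Fin (n + 1)) where
  toFun v := if h : v = Fin.last n then v else (S (v.castPred h)).castSucc
  invFun v := if h : v = Fin.last n then v else (S⁻¹ (v.castPred h)).castSucc
  left_inv v := by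
    by_cases h : v = Fin.last n
    · simp [h]
    · simp [h, (Fin.castSucc_lt_last _).ne, Fin.castPred_castSucc,
        Fin.castSucc_castPred]
  right_inv v := by
    by_cases h : v = Fin.last n
    · simp [h]
    · simp [h, (Fin.castSucc_lt_last _).ne, Fin.castPred_castSucc,
        Fin.castSucc_castPred]

@[simp] lemma liftP_castSucc (S : Perm (Fin n)) (v : Fin n) :
    liftP S v.castSucc = (S v).castSucc := by
  simp [liftP, Equiv.coe_fn_mk, (Fin.castSucc_lt_last v).ne, Fin.castPred_castSucc]

@[simp] lemma liftP_last (S : Perm (Fin n)) : liftP S (Fin.last n) = Fin.last n := by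
  simp [liftP]

/-- Extension of a tour: insert the new vertex `last` between `0` and `S 0`. -/
def extP (S : Perm (Fin n)) : Perm (Fin (n + 1)) :=
  liftP S * Equiv.swap (Fin.castSucc (0 : Fin n)) (Fin.last n)

lemma extP_zero (S : Perm (Fin n)) : extP S (Fin.castSucc (0 : Fin n)) = Fin.last n := by
  rw [extP, Equiv.Perm.mul_apply, Equiv.swap_apply_left, liftP_last]

lemma extP_last (S : Perm (Fin n)) : extP S (Fin.last n) = (S 0).castSucc := by
  rw [extP, Equiv.Perm.mul_apply, Equiv.swap_apply_right, liftP_castSucc]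

lemma extP_castSucc (S : Perm (Fin n)) {v : Fin n} (hv : v ≠ 0) :
    extP S v.castSucc = (S v).castSucc := by
  have h1 : v.castSucc ≠ Fin.castSucc (0 : Fin n) := by
    simpa [Fin.castSucc_inj] using hv
  have h2 : v.castSucc ≠ Fin.last n := (Fin.castSucc_lt_last v).ne
  rw [extP, Equiv.Perm.mul_apply, Equiv.swap_apply_of_ne_of_ne h1 h2, liftP_castSucc]

end TSPAux

namespace TSPAux

open Equiv Equiv.Perm

variable {n : ℕ} [NeZero n]

lemma support_univ_iff {m : ℕ} {S : Perm (Fin m)} :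
    S.support = Finset.univ ↔ ∀ v, S v ≠ v := by
  rw [Finset.eq_univ_iff_forall]
  simp [Equiv.Perm.mem_support]

lemma extP_ne (S : Perm (Fin n)) (hS : ∀ v, S v ≠ v) (x : Fin (n + 1)) :
    extP S x ≠ x := by
  induction x using Fin.lastCases with
  | last =>
    rw [extP_last]
    exact (Fin.castSucc_lt_last _).ne
  | cast v =>
    by_cases hv : v = 0
    · subst hv
      rw [extP_zero]
      exact (Fin.castSucc_lt_last _).ne'
    · rw [extP_castSucc S hv]
      simpa [Fin.castSucc_inj] using hS v

lemma isTour_extP {S : Perm (Fin n)} (hS : IsTour S) : IsTour (extP S) := by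
  have hSne : ∀ v, S v ≠ v := support_univ_iff.mp hS.2
  have hne := extP_ne S hSne
  constructor
  · refine ⟨Fin.castSucc 0, hne _, fun y hy => ?_⟩
    -- key induction
    have key : ∀ j : ℕ, ∃ m : ℕ, (extP S ^ m) (Fin.castSucc 0) = Fin.castSucc ((S ^ j) 0) := by
      intro j
      induction j with
      | zero => exact ⟨0, by simp⟩
      | succ j ih =>
        obtain ⟨m, hm⟩ := ih
        by_cases h0 : (S ^ j) 0 = 0
        · refine ⟨2, ?_⟩
          have : (S ^ (j + 1)) 0 = S 0 := by
            rw [pow_succ', Equiv.Perm.mul_apply, h0]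
          rw [this]
          show (extP S ^ 2) (Fin.castSucc 0) = _
          rw [sq, Equiv.Perm.mul_apply, extP_zero, extP_last]
        · refine ⟨m + 1, ?_⟩
          rw [pow_succ', Equiv.Perm.mul_apply, pow_succ', Equiv.Perm.mul_apply, hm,
            extP_castSucc S h0]
    -- now use key to get SameCycle
    induction y using Fin.lastCases with
    | last => exact ⟨1, by rw [zpow_one, extP_zero]⟩
    | cast w =>
      by_cases hw : w = 0
      · subst hw; exact Equiv.Perm.SameCycle.refl _ _
      · obtain ⟨j, hj⟩ := hS.1.exists_pow_eq (hSne 0) (hSne w)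
        obtain ⟨m, hm⟩ := key j
        exact ⟨(m : ℤ), by rw [zpow_natCast, hm, hj]⟩
  · exact support_univ_iff.mpr hne

end TSPAux

namespace TSPAux

open Equiv Equiv.Perm

variable {n : ℕ} [NeZero n]

lemma tourCost_extP {c : Fin n → Fin n → ℝ} (hc : IsMetric c)
    {S : Perm (Fin n)} (hS : IsTour S) :
    tourCost (cost' c) (extP S) = tourCost c S := by
  have hSne : ∀ v, S v ≠ v := support_univ_iff.mp hS.2
  rw [tourCost, tourCost, Fin.sum_univ_castSucc]
  have hlastterm : cost' c (Fin.last n) (extP S (Fin.last n)) = c 0 (S 0) := by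
    rw [extP_last, cost', if_neg (Fin.castSucc_lt_last _).ne', fdown_last, fdown_castSucc]
  have hterm : ∀ v : Fin n, cost' c v.castSucc (extP S v.castSucc) =
      if v = 0 then 0 else c v (S v) := by
    intro v
    by_cases hv : v = 0
    · subst hv
      rw [extP_zero, cost', if_neg (Fin.castSucc_lt_last _).ne, if_pos rfl]
      rw [fdown_last, fdown_castSucc, hc.2.1]
    · rw [extP_castSucc S hv, cost', if_neg (by simpa [Fin.castSucc_inj] using fun h => hSne v h.symm),
        fdown_castSucc, fdown_castSucc, if_neg hv]
  rw [hlastterm]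
  simp only [hterm]
  have : ∀ v : Fin n, c v (S v) =
      (if v = 0 then 0 else c v (S v)) + (if v = 0 then c v (S v) else 0) := by
    intro v; by_cases hv : v = 0 <;> simp [hv]
  conv_rhs => rw [Finset.sum_congr rfl (fun v _ => this v)]
  rw [Finset.sum_add_distrib, Finset.sum_ite_eq' Finset.univ (0 : Fin n) (fun v => c v (S v))]
  simp

lemma mem_tourEdges_extP {S : Perm (Fin n)} {e : Sym2 (Fin (n + 1))} :
    e ∈ tourEdges (extP S) ↔
      e = s(Fin.castSucc (0 : Fin n), Fin.last n) ∨
      e = s(Fin.last n, Fin.castSucc (S 0)) ∨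
      ∃ v : Fin n, v ≠ 0 ∧ e = s(Fin.castSucc v, Fin.castSucc (S v)) := by
  rw [tourEdges, Finset.mem_image]
  constructor
  · rintro ⟨w, -, rfl⟩
    induction w using Fin.lastCases with
    | last => exact Or.inr (Or.inl (by rw [extP_last]))
    | cast v =>
      by_cases hv : v = 0
      · subst hv; exact Or.inl (by rw [extP_zero])
      · exact Or.inr (Or.inr ⟨v, hv, by rw [extP_castSucc S hv]⟩)
  · rintro (rfl | rfl | ⟨v, hv, rfl⟩)
    · exact ⟨Fin.castSucc 0, Finset.mem_univ _, by rw [extP_zero]⟩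
    · exact ⟨Fin.last n, Finset.mem_univ _, by rw [extP_last]⟩
    · exact ⟨Fin.castSucc v, Finset.mem_univ _, by rw [extP_castSucc S hv]⟩

lemma last_not_mem_map {e : Sym2 (Fin n)} :
    Fin.last n ∉ Sym2.map Fin.castSucc e := by
  induction e using Sym2.ind with
  | _ x y =>
    rw [Sym2.map_pair_eq, Sym2.mem_iff]
    push_neg
    exact ⟨(Fin.castSucc_lt_last x).ne', (Fin.castSucc_lt_last y).ne'⟩

lemma mem_edge_last_extP {S : Perm (Fin n)} {x : Fin (n + 1)}
    (h : s(x, Fin.last n) ∈ tourEdges (extP S)) :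
    x = Fin.castSucc (0 : Fin n) ∨ x = Fin.castSucc (S 0) := by
  rcases mem_tourEdges_extP.mp h with h1 | h1 | ⟨v, hv, h1⟩
  · rw [Sym2.eq_iff] at h1
    rcases h1 with ⟨rfl, -⟩ | ⟨rfl, h2⟩
    · exact Or.inl rfl
    · exact absurd h2.symm (Fin.castSucc_lt_last _).ne
  · rw [Sym2.eq_iff] at h1
    rcases h1 with ⟨rfl, h2⟩ | ⟨rfl, h2⟩
    · exact absurd h2.symm (Fin.castSucc_lt_last _).ne
    · exact Or.inr rfl
  · exfalso
    have : Fin.last n ∈ s(Fin.castSucc v, Fin.castSucc (S v)) := by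
      rw [← h1]; simp
    rw [show s(Fin.castSucc v, Fin.castSucc (S v)) = Sym2.map Fin.castSucc s(v, S v) from
      (Sym2.map_pair_eq _ _ _).symm] at this
    exact last_not_mem_map this

end TSPAux

namespace TSPAux

open Equiv Equiv.Perm

variable {n : ℕ} [NeZero n]

/-- Restrict a permutation of `Fin (n+1)` fixing `last` to `Fin n`. -/
def restrictP (P : Perm (Fin (n + 1))) (hP : P (Fin.last n) = Fin.last n) :
    Perm (Fin n) where
  toFun v := fdown (P v.castSucc)
  invFun v := fdown (P⁻¹ v.castSucc)
  left_inv v := by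
    have h1 : P v.castSucc ≠ Fin.last n := fun h =>
      (Fin.castSucc_lt_last v).ne (P.injective (h.trans hP.symm))
    show fdown (P⁻¹ (fdown (P v.castSucc)).castSucc) = v
    rw [castSucc_fdown h1, Equiv.Perm.inv_apply_self, fdown_castSucc]
  right_inv v := by
    have hP' : P⁻¹ (Fin.last n) = Fin.last n :=
      P.injective (by rw [Equiv.Perm.apply_inv_self, hP])
    have h1 : P⁻¹ v.castSucc ≠ Fin.last n := fun h =>
      (Fin.castSucc_lt_last v).ne (P⁻¹.injective (h.trans hP'.symm))
    show fdown (P (fdown (P⁻¹ v.castSucc)).castSucc) = v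
    rw [castSucc_fdown h1, Equiv.Perm.apply_inv_self, fdown_castSucc]

lemma restrictP_apply (P : Perm (Fin (n + 1))) (hP : P (Fin.last n) = Fin.last n)
    (v : Fin n) : restrictP P hP v = fdown (P v.castSucc) := rfl

section Short

variable (U : Perm (Fin (n + 1)))

/-- `swap last (U last) * U` fixes `last`. -/
lemma swapMul_fixes_last :
    (Equiv.swap (Fin.last n) (U (Fin.last n)) * U) (Fin.last n) = Fin.last n := by
  rw [Equiv.Perm.mul_apply, Equiv.swap_apply_right]

/-- The shortcut of a tour of `Fin (n+1)`: skip the vertex `last`. -/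
def shortT : Perm (Fin n) :=
  restrictP (Equiv.swap (Fin.last n) (U (Fin.last n)) * U) (swapMul_fixes_last U)

lemma swapMul_apply {w : Fin (n + 1)} (hw : w ≠ Fin.last n) :
    (Equiv.swap (Fin.last n) (U (Fin.last n)) * U) w =
      if U w = Fin.last n then U (Fin.last n) else U w := by
  rw [Equiv.Perm.mul_apply]
  by_cases h : U w = Fin.last n
  · rw [if_pos h, h, Equiv.swap_apply_left]
  · rw [if_neg h]
    exact Equiv.swap_apply_of_ne_of_ne h (fun hc => hw (U.injective hc))

lemma shortT_apply_of_ne {v : Fin n} (hv : U v.castSucc ≠ Fin.last n) :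
    shortT U v = fdown (U v.castSucc) := by
  rw [shortT, restrictP_apply, swapMul_apply U (Fin.castSucc_lt_last v).ne,
    if_neg hv]

lemma shortT_apply_of_eq {v : Fin n} (hv : U v.castSucc = Fin.last n) :
    shortT U v = fdown (U (Fin.last n)) := by
  rw [shortT, restrictP_apply, swapMul_apply U (Fin.castSucc_lt_last v).ne,
    if_pos hv]

variable {U}

lemma not_two_cycle (hU : IsTour U) (hn : 3 ≤ n) :
    U (U (Fin.last n)) ≠ Fin.last n := by
  intro h
  have hUlast : U (Fin.last n) ≠ Fin.last n := support_univ_iff.mp hU.2 _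
  have := hU.1.eq_swap_of_apply_apply_eq_self hUlast h
  have hcard : U.support.card = n + 1 := by rw [hU.2, Finset.card_univ, Fintype.card_fin]
  rw [this, Equiv.Perm.card_support_swap hUlast.symm] at hcard
  omega

lemma shortT_ne (hU : IsTour U) (hn : 3 ≤ n) (v : Fin n) : shortT U v ≠ v := by
  have hUne : ∀ w, U w ≠ w := support_univ_iff.mp hU.2
  by_cases hv : U v.castSucc = Fin.last n
  · rw [shortT_apply_of_eq U hv]
    intro h
    have hbl : U (Fin.last n) ≠ Fin.last n := hUne _
    have : U (Fin.last n) = v.castSucc := by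
      rw [← castSucc_fdown hbl, h]
    apply not_two_cycle hU hn
    rw [this, hv]
  · rw [shortT_apply_of_ne U hv]
    intro h
    have : U v.castSucc = v.castSucc := by
      rw [← castSucc_fdown hv, h]
    exact hUne _ this

lemma isTour_shortT (hU : IsTour U) (hn : 3 ≤ n) : IsTour (shortT U) := by
  have hUne : ∀ w, U w ≠ w := support_univ_iff.mp hU.2
  have hne := shortT_ne hU hn
  constructor
  · refine ⟨0, hne 0, fun y hy => ?_⟩
    have key : ∀ j : ℕ, ∃ m : ℕ,
        Fin.castSucc ((shortT U ^ m) 0) = (U ^ j) (Fin.castSucc (0 : Fin n)) ∨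
        ((U ^ j) (Fin.castSucc (0 : Fin n)) = Fin.last n ∧
          Fin.castSucc ((shortT U ^ m) 0) = U⁻¹ (Fin.last n)) := by
      intro j
      induction j with
      | zero => exact ⟨0, Or.inl (by simp)⟩
      | succ j ih =>
        obtain ⟨m, hm | ⟨h1, h2⟩⟩ := ih
        · by_cases hw : (U ^ j) (Fin.castSucc (0 : Fin n)) = U⁻¹ (Fin.last n)
          · refine ⟨m, Or.inr ⟨?_, by rw [hm, hw]⟩⟩
            rw [pow_succ', Equiv.Perm.mul_apply, hw, Equiv.Perm.apply_inv_self]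
          · refine ⟨m + 1, Or.inl ?_⟩
            have hUw : U ((U ^ j) (Fin.castSucc (0 : Fin n))) ≠ Fin.last n := by
              intro hc
              exact hw (by rw [← hc, Equiv.Perm.inv_apply_self])
            have hstep : shortT U ((shortT U ^ m) 0) = fdown (U ((U ^ j) (Fin.castSucc (0:Fin n)))) := by
              rw [shortT_apply_of_ne U (by rw [hm]; exact fun hc => hw (by rw [← hc, Equiv.Perm.inv_apply_self])), hm]
            rw [pow_succ', Equiv.Perm.mul_apply, pow_succ', Equiv.Perm.mul_apply, hstep,
              castSucc_fdown hUw]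
        · refine ⟨m + 1, Or.inl ?_⟩
          have hbl : U (Fin.last n) ≠ Fin.last n := hUne _
          have hstep : shortT U ((shortT U ^ m) 0) = fdown (U (Fin.last n)) := by
            rw [shortT_apply_of_eq U (by rw [h2, Equiv.Perm.apply_inv_self])]
          rw [pow_succ', Equiv.Perm.mul_apply, pow_succ', Equiv.Perm.mul_apply, hstep,
            castSucc_fdown hbl, h1]
    obtain ⟨j, hj⟩ := hU.1.exists_pow_eq (hUne (Fin.castSucc (0 : Fin n)))
      (hUne y.castSucc)
    obtain ⟨m, hm | ⟨h1, -⟩⟩ := key j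
    · refine ⟨(m : ℤ), ?_⟩
      rw [zpow_natCast]
      have : Fin.castSucc ((shortT U ^ m) 0) = Fin.castSucc y := by rw [hm, hj]
      exact Fin.castSucc_inj.mp this
    · rw [hj] at h1
      exact absurd h1 (Fin.castSucc_lt_last y).ne
  · exact support_univ_iff.mpr hne

end Short

end TSPAux

namespace TSPAux

open Equiv Equiv.Perm

variable {n : ℕ} [NeZero n]

lemma tourCost_shortT_le {c : Fin n → Fin n → ℝ} (hc : IsMetric c)
    {U : Perm (Fin (n + 1))} (hU : IsTour U) :
    tourCost c (shortT U) ≤ tourCost (cost' c) U := by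
  have hUne : ∀ w, U w ≠ w := support_univ_iff.mp hU.2
  have ha : U⁻¹ (Fin.last n) ≠ Fin.last n := by
    intro h
    exact hUne (Fin.last n) (by conv_lhs => rw [← h, Equiv.Perm.apply_inv_self])
  have key : ∀ v : Fin n, c v (shortT U v) ≤
      cost' c v.castSucc (U v.castSucc) +
        (if v = fdown (U⁻¹ (Fin.last n)) then cost' c (Fin.last n) (U (Fin.last n)) else 0) := by
    intro v
    by_cases hv : U v.castSucc = Fin.last n
    · have hva : v.castSucc = U⁻¹ (Fin.last n) := by
        rw [← hv, Equiv.Perm.inv_apply_self]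
      have hvf : v = fdown (U⁻¹ (Fin.last n)) := by
        rw [← hva, fdown_castSucc]
      rw [if_pos hvf, shortT_apply_of_eq U hv]
      have e1 : cost' c v.castSucc (U v.castSucc) = c v 0 := by
        rw [hv, cost', if_neg (Fin.castSucc_lt_last v).ne, fdown_castSucc, fdown_last]
      have e2 : cost' c (Fin.last n) (U (Fin.last n)) = c 0 (fdown (U (Fin.last n))) := by
        rw [cost', if_neg (fun h => hUne _ h.symm), fdown_last]
      rw [e1, e2]
      exact hc.2.2.2 v (fdown (U (Fin.last n))) 0
    · have hvf : v ≠ fdown (U⁻¹ (Fin.last n)) := by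
        intro h
        apply hv
        rw [h, castSucc_fdown ha, Equiv.Perm.apply_inv_self]
      rw [if_neg hvf, shortT_apply_of_ne U hv, add_zero, cost',
        if_neg (fun h => hUne v.castSucc h.symm), fdown_castSucc]
  calc tourCost c (shortT U) = ∑ v : Fin n, c v (shortT U v) := rfl
    _ ≤ ∑ v : Fin n, (cost' c v.castSucc (U v.castSucc) +
        (if v = fdown (U⁻¹ (Fin.last n)) then cost' c (Fin.last n) (U (Fin.last n)) else 0)) :=
      Finset.sum_le_sum (fun v _ => key v)
    _ = ∑ v : Fin n, cost' c v.castSucc (U v.castSucc) +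
        cost' c (Fin.last n) (U (Fin.last n)) := by
      rw [Finset.sum_add_distrib, Finset.sum_ite_eq' Finset.univ
        (fdown (U⁻¹ (Fin.last n))) (fun _ => cost' c (Fin.last n) (U (Fin.last n)))]
      simp
    _ = tourCost (cost' c) U := by
      rw [tourCost, Fin.sum_univ_castSucc]

end TSPAux

namespace TSPAux

open Equiv Equiv.Perm

variable {n : ℕ} [NeZero n]

lemma card_edges_shortT_le {U : Perm (Fin (n + 1))} {T : Perm (Fin n)}
    (hU : IsTour U) (hn : 3 ≤ n) :
    (tourEdges (shortT U) \ tourEdges T).card ≤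
      (tourEdges U \ tourEdges (extP T)).card := by
  classical
  have hUne : ∀ w, U w ≠ w := support_univ_iff.mp hU.2
  set a := U⁻¹ (Fin.last n) with ha_def
  set b := U (Fin.last n) with hb_def
  have ha : a ≠ Fin.last n := by
    intro h
    exact hUne (Fin.last n) (by conv_lhs => rw [← h, Equiv.Perm.apply_inv_self])
  have hb : b ≠ Fin.last n := hUne _
  have hab : a ≠ b := by
    intro h
    apply not_two_cycle hU hn
    rw [← hb_def, ← h, Equiv.Perm.apply_inv_self]
  have hUa : U a = Fin.last n := Equiv.Perm.apply_inv_self U _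
  set sE : Sym2 (Fin n) := s(fdown a, fdown b) with hsE_def
  set y : Sym2 (Fin (n + 1)) :=
    if s(a, Fin.last n) ∈ tourEdges (extP T) then s(Fin.last n, b) else s(a, Fin.last n)
    with hy_def
  have hy_mem_U : y ∈ tourEdges U := by
    rw [hy_def]
    split_ifs
    · exact Finset.mem_image.mpr ⟨Fin.last n, Finset.mem_univ _, rfl⟩
    · exact Finset.mem_image.mpr ⟨a, Finset.mem_univ _, by rw [hUa]⟩
  have hlast_mem_y : Fin.last n ∈ y := by
    rw [hy_def]
    split_ifs <;> simp
  refine Finset.card_le_card_of_injOn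
    (fun e => if e = sE then y else Sym2.map Fin.castSucc e) ?_ ?_
  · intro e he
    rw [Finset.mem_coe, Finset.mem_sdiff] at he
    obtain ⟨heU, heT⟩ := he
    rw [Finset.mem_coe, Finset.mem_sdiff]
    show (if e = sE then y else Sym2.map Fin.castSucc e) ∈ tourEdges U ∧
      (if e = sE then y else Sym2.map Fin.castSucc e) ∉ tourEdges (extP T)
    by_cases hesE : e = sE
    · rw [if_pos hesE]
      refine ⟨hy_mem_U, ?_⟩
      rw [hy_def]
      split_ifs with h1
      · intro h2
        -- both s(a,last) and s(last,b) in extP T edges; derive sE ∈ tourEdges T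
        have hA : a = Fin.castSucc (0 : Fin n) ∨ a = Fin.castSucc (T 0) :=
          mem_edge_last_extP h1
        have hB : b = Fin.castSucc (0 : Fin n) ∨ b = Fin.castSucc (T 0) := by
          apply mem_edge_last_extP
          rwa [Sym2.eq_swap] at h2
        have hTmem : s((0 : Fin n), T 0) ∈ tourEdges T :=
          Finset.mem_image.mpr ⟨0, Finset.mem_univ _, rfl⟩
        apply heT
        rw [hesE, hsE_def]
        rcases hA with hA | hA <;> rcases hB with hB | hB
        · exact absurd (hA.trans hB.symm) hab
        · rw [hA, hB, fdown_castSucc, fdown_castSucc]; exact hTmem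
        · rw [hA, hB, fdown_castSucc, fdown_castSucc, Sym2.eq_swap]; exact hTmem
        · exact absurd (hA.trans hB.symm) hab
      · exact h1
    · rw [if_neg hesE]
      obtain ⟨v, -, hv⟩ := Finset.mem_image.mp heU
      have hva : v.castSucc ≠ a := by
        intro h
        apply hesE
        rw [← hv, shortT_apply_of_eq U (by rw [h, hUa]), hsE_def, ← hb_def, ← h,
          fdown_castSucc]
      have hUv : U v.castSucc ≠ Fin.last n := by
        intro h
        exact hva (by rw [ha_def, ← h, Equiv.Perm.inv_apply_self])
      have he_eq : e = s(v, fdown (U v.castSucc)) := by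
        rw [← hv, shortT_apply_of_ne U hUv]
      constructor
      · rw [he_eq, Sym2.map_pair_eq, castSucc_fdown hUv]
        exact Finset.mem_image.mpr ⟨v.castSucc, Finset.mem_univ _, rfl⟩
      · intro hmem
        rcases mem_tourEdges_extP.mp hmem with h1 | h1 | ⟨w, hw, h1⟩
        · have : Fin.last n ∈ Sym2.map Fin.castSucc e := by rw [h1]; simp
          exact last_not_mem_map this
        · have : Fin.last n ∈ Sym2.map Fin.castSucc e := by rw [h1]; simp
          exact last_not_mem_map this
        · rw [show s(Fin.castSucc w, Fin.castSucc (T w)) =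
            Sym2.map Fin.castSucc s(w, T w) from (Sym2.map_pair_eq _ _ _).symm] at h1
          have := Sym2.map.injective (Fin.castSucc_injective n) h1
          apply heT
          rw [this]
          exact Finset.mem_image.mpr ⟨w, Finset.mem_univ _, rfl⟩
  · intro e1 he1 e2 he2 heq
    replace heq : (if e1 = sE then y else Sym2.map Fin.castSucc e1) =
        (if e2 = sE then y else Sym2.map Fin.castSucc e2) := heq
    by_cases h1 : e1 = sE <;> by_cases h2 : e2 = sE
    · rw [h1, h2]
    · rw [if_pos h1, if_neg h2] at heq
      exact absurd (heq ▸ hlast_mem_y) last_not_mem_map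
    · rw [if_neg h1, if_pos h2] at heq
      exact absurd (heq.symm ▸ hlast_mem_y) last_not_mem_map
    · rw [if_neg h1, if_neg h2] at heq
      exact Sym2.map.injective (Fin.castSucc_injective n) heq

end TSPAux

theorem stmt_7 (k : ℕ) (hk : 2 ≤ k) (n : ℕ) (hn : 3 ≤ n)
    (cost : Fin n → Fin n → ℝ) (hmetric : IsMetric cost)
    (T : Equiv.Perm (Fin n)) (hT : IsKOptimal k cost T) :
    ∃ cost' : Fin (n + 1) → Fin (n + 1) → ℝ, IsMetric cost' ∧
      ∃ T' : Equiv.Perm (Fin (n + 1)), IsKOptimal k cost' T' ∧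
        tourCost cost' T' = tourCost cost T ∧
        ∀ (S' : Equiv.Perm (Fin (n + 1))) (S : Equiv.Perm (Fin n)),
          IsOptimalTour cost' S' → IsOptimalTour cost S →
          tourCost cost' S' ≤ tourCost cost S := by
  haveI : NeZero n := ⟨by omega⟩
  refine ⟨TSPAux.cost' cost, TSPAux.isMetric_cost' hmetric, TSPAux.extP T, ⟨?_, ?_⟩, ?_, ?_⟩
  · exact TSPAux.isTour_extP hT.1
  · intro U hU hcard
    calc tourCost (TSPAux.cost' cost) (TSPAux.extP T) = tourCost cost T :=
        TSPAux.tourCost_extP hmetric hT.1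
      _ ≤ tourCost cost (TSPAux.shortT U) :=
        hT.2 _ (TSPAux.isTour_shortT hU hn)
          (le_trans (TSPAux.card_edges_shortT_le hU hn) hcard)
      _ ≤ tourCost (TSPAux.cost' cost) U := TSPAux.tourCost_shortT_le hmetric hU
  · exact TSPAux.tourCost_extP hmetric hT.1
  · intro S' S hS' hS
    exact le_of_le_of_eq (hS'.2 (TSPAux.extP S) (TSPAux.isTour_extP hS.1))
      (TSPAux.tourCost_extP hmetric hS.1)
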